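/- Let $f : \mathbb{R}^d \to \mathbb{R}$ be differentiable with minimizer $x^*$, let $\phi$ be a twice continuously differentiable function with $\nabla^2\phi(x)$ positive definite for all $x$, and suppose the mirror PL inequality holds: $f(x) - f(x^*) \le \frac{C}{2}\langle \nabla f(x), [\nabla^2\phi(x)]^{-1}\nabla f(x)\rangle$ for all $x$. If $(x_t)_{t\ge 0}$ solves the mirror flow $\dot x_t = -[\nabla^2\phi(x_t)]^{-1}\nabla f(x_t)$, then $f(x_t) - f(x^*) \le (f(x_0) - f(x^*)) e^{-2t/C}$. -/

import Mathlib

open Matrix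

/-- The Hessian matrix of `φ : ℝᵈ → ℝ` at `x`, with entries the second partial derivatives. -/
noncomputable def hessian {d : ℕ} (φ : EuclideanSpace ℝ (Fin d) → ℝ)
    (x : EuclideanSpace ℝ (Fin d)) : Matrix (Fin d) (Fin d) ℝ :=
  Matrix.of fun i j =>
    iteratedFDeriv ℝ 2 φ x ![EuclideanSpace.single i (1 : ℝ), EuclideanSpace.single j (1 : ℝ)]

/-- View a Euclidean vector as a plain vector `Fin d → ℝ`. -/
def ofE {d : ℕ} (v : EuclideanSpace ℝ (Fin d)) : Fin d → ℝ := v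

/-- View a plain vector `Fin d → ℝ` as a Euclidean vector. -/
def toE {d : ℕ} (v : Fin d → ℝ) : EuclideanSpace ℝ (Fin d) := WithLp.toLp 2 v

/-- exponential decay of the objective along the mirror flow under a mirror
Polyak-Łojasiewicz inequality. -/
theorem stmt_17 {d : ℕ} (f : EuclideanSpace ℝ (Fin d) → ℝ) (hf : Differentiable ℝ f)
    (xstar : EuclideanSpace ℝ (Fin d)) (hmin : ∀ x, f xstar ≤ f x)
    (φ : EuclideanSpace ℝ (Fin d) → ℝ) (hφ : ContDiff ℝ 2 φ)
    (hφpd : ∀ x, (hessian φ x).PosDef)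
    (C : ℝ) (hC : 0 < C)
    (hMPL : ∀ x, f x - f xstar
      ≤ C / 2 * (ofE (gradient f x) ⬝ᵥ (hessian φ x)⁻¹.mulVec (ofE (gradient f x))))
    (x : ℝ → EuclideanSpace ℝ (Fin d))
    (hflow : ∀ t : ℝ, 0 ≤ t →
      HasDerivAt x (toE (-(hessian φ (x t))⁻¹.mulVec (ofE (gradient f (x t))))) t) :
    ∀ t : ℝ, 0 ≤ t →
      f (x t) - f xstar ≤ (f (x 0) - f xstar) * Real.exp (-2 * t / C) := by
  intro T hT
  set Q : ℝ → ℝ := fun t =>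
    ofE (gradient f (x t)) ⬝ᵥ (hessian φ (x t))⁻¹.mulVec (ofE (gradient f (x t))) with hQ
  set g : ℝ → ℝ := fun t => f (x t) - f xstar with hgdef
  have hg' : ∀ t : ℝ, 0 ≤ t → HasDerivAt g (-(Q t)) t := by
    intro t ht
    have hgrad := ((hf (x t)).hasGradientAt).hasFDerivAt
    have hcomp := (hgrad.comp_hasDerivAt t (hflow t ht)).sub_const (f xstar)
    convert hcomp using 1
    · rfl
    · rfl
    · rfl
    simp only [InnerProductSpace.toDual_apply_apply, PiLp.inner_apply, RCLike.inner_apply,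
      starRingEnd_apply, star_trivial]
    simp only [hQ, toE, ofE, dotProduct, Pi.neg_apply, mul_neg, mul_comm]
    rw [← Finset.sum_neg_distrib]
  have key := le_gronwallBound_of_liminf_deriv_right_le
    (f := g) (f' := fun t => -(Q t)) (δ := g 0) (K := -2 / C) (ε := 0) (a := 0) (b := T)
    (fun t ht => ((hg' t ht.1).continuousAt).continuousWithinAt)
    (fun t ht r hr => ((hg' t ht.1).hasDerivWithinAt.liminf_right_slope_le hr))
    le_rfl
    (fun t ht => by
      have h1 := hMPL (x t)
      have h2 : g t ≤ C / 2 * Q t := h1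
      have h3 : 2 * g t ≤ C * Q t := by
        calc 2 * g t ≤ 2 * (C / 2 * Q t) := by linarith
        _ = C * Q t := by ring
      have : -(Q t) ≤ -2 / C * g t := by
        rw [div_mul_eq_mul_div, neg_le, show -(-2 * g t / C) = 2 * g t / C by ring,
          div_le_iff₀ hC]
        linarith
      simpa using this)
  have := key T ⟨hT, le_rfl⟩
  rwa [sub_zero, gronwallBound_ε0, show -2 / C * T = -2 * T / C by ring] at this
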